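/- Let p be a prime and let b : ℕ → ℤ_p be not identically zero with |b_j|_p → 0 as j → ∞. Set V = min_j v_p(b_j) and let j₀ be the largest index j with v_p(b_j) = V. Fix r ∈ ℕ and z ∈ ℤ_p, and for each j ∈ ℕ define c_j = p^{r j} · Σ_{i ≥ j} C(i, j) b_i z^{i−j} ∈ ℤ_p (these series converge; the c_j are the power series coefficients of h(x) = F(p^r x + z) where F(x) = Σ_j b_j x^j). Then v_p(c_{j₀}) = V + r·j₀; in particular min_j v_p(c_j) ≤ V + r·j₀. -/

import Mathlib

open Filter

/-- The additive `p`-adic valuation on `ℚ_p`, with values in `WithTop ℤ` (`v_p 0 = ∞`). -/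
noncomputable def vP (p : ℕ) [Fact p.Prime] (x : ℚ_[p]) : WithTop ℤ :=
  Padic.addValuation x

/-- Let `b : ℕ → ℤ_p` be not identically zero with `|b_j|_p → 0`,
`V = min_j v_p(b_j)` attained last at `j₀`.  Fix `r ∈ ℕ` and `z ∈ ℤ_p`, and let
`c_j = p^{r j} ∑_{i ≥ j} C(i,j) b_i z^{i−j}` be the coefficients of `F(p^r x + z)`.
Then `v_p(c_{j₀}) = V + r j₀`; in particular `min_j v_p(c_j) ≤ V + r j₀`. -/
theorem substituted_series_coeff_valuation (p : ℕ) [hp : Fact p.Prime]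
    (b : ℕ → ℤ_[p]) (hb_ne : ∃ j, b j ≠ 0)
    (hb : Tendsto (fun j => ‖b j‖) atTop (nhds 0))
    (j₀ : ℕ) (hj₀min : ∀ j : ℕ, vP p (b j₀ : ℚ_[p]) ≤ vP p (b j : ℚ_[p]))
    (hj₀max : ∀ j : ℕ, j₀ < j → vP p (b j₀ : ℚ_[p]) < vP p (b j : ℚ_[p]))
    (r : ℕ) (z : ℤ_[p]) (c : ℕ → ℤ_[p])
    (hc : ∀ j : ℕ, c j = (p : ℤ_[p]) ^ (r * j) *
      ∑' i : ℕ, ((j + i).choose j : ℤ_[p]) * b (j + i) * z ^ i) :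
    vP p (c j₀ : ℚ_[p]) = vP p (b j₀ : ℚ_[p]) + ((r * j₀ : ℤ) : WithTop ℤ) ∧
    ∃ j : ℕ, vP p (c j : ℚ_[p]) ≤ vP p (b j₀ : ℚ_[p]) + ((r * j₀ : ℤ) : WithTop ℤ) := by
  have hp1 : (1 : ℝ) < p := by exact_mod_cast hp.1.one_lt
  have hppos : (0 : ℝ) < p := lt_trans one_pos hp1
  -- vP of a nonzero p-adic integer is its (integer) valuation
  have hvP : ∀ x : ℤ_[p], x ≠ 0 → vP p (x : ℚ_[p]) = (x.valuation : WithTop ℤ) := by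
    intro x hx
    have hx' : (x : ℚ_[p]) ≠ 0 := by
      exact x.coe_ne_zero.mpr hx
    rw [vP, Padic.addValuation.apply hx', PadicInt.valuation_coe]
    rfl
  have hvPtop : vP p ((0 : ℤ_[p]) : ℚ_[p]) = ⊤ := by
    simp only [vP, PadicInt.coe_zero]
    exact Padic.addValuation.map_zero
  -- b j₀ ≠ 0
  have hb0 : b j₀ ≠ 0 := by
    obtain ⟨j, hj⟩ := hb_ne
    intro h
    have h1 := hj₀min j
    rw [h, hvPtop] at h1
    have h2 : vP p (b j : ℚ_[p]) = ⊤ := top_le_iff.mp h1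
    rcases eq_or_ne (b j) 0 with h3 | h3
    · exact hj h3
    · rw [hvP _ h3] at h2
      exact WithTop.coe_ne_top h2
  have hbpos : (0 : ℝ) < ‖b j₀‖ := norm_pos_iff.mpr hb0
  -- strict norm decrease past j₀
  have hlt : ∀ j, j₀ < j → ‖b j‖ ≤ ‖b j₀‖ * (p : ℝ)⁻¹ := by
    intro j hj
    rcases eq_or_ne (b j) 0 with h | h
    · rw [h, norm_zero]
      positivity
    · have hv := hj₀max j hj
      rw [hvP _ hb0, hvP _ h] at hv
      have hval : (b j₀).valuation < (b j).valuation := by exact_mod_cast hv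
      rw [PadicInt.norm_eq_zpow_neg_valuation h, PadicInt.norm_eq_zpow_neg_valuation hb0, ← zpow_neg_one,
        ← zpow_add₀ (ne_of_gt hppos)]
      exact (zpow_right_strictMono₀ hp1).monotone (by omega)
  set f : ℕ → ℤ_[p] := fun i => ((j₀ + i).choose j₀ : ℤ_[p]) * b (j₀ + i) * z ^ i with hf
  have hnorm_f : ∀ i, ‖f i‖ ≤ ‖b (j₀ + i)‖ := by
    intro i
    calc ‖f i‖ ≤ ‖((j₀ + i).choose j₀ : ℤ_[p]) * b (j₀ + i)‖ * ‖z ^ i‖ := norm_mul_le _ _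
      _ ≤ ‖((j₀ + i).choose j₀ : ℤ_[p]) * b (j₀ + i)‖ * 1 := by
          gcongr
          exact PadicInt.norm_le_one _
      _ = ‖((j₀ + i).choose j₀ : ℤ_[p]) * b (j₀ + i)‖ := mul_one _
      _ ≤ ‖((j₀ + i).choose j₀ : ℤ_[p])‖ * ‖b (j₀ + i)‖ := norm_mul_le _ _
      _ ≤ 1 * ‖b (j₀ + i)‖ := by
          gcongr
          exact PadicInt.norm_le_one _
      _ = ‖b (j₀ + i)‖ := one_mul _
  have hsum : Summable f := by
    apply NonarchimedeanAddGroup.summable_of_tendsto_cofinite_zero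
    rw [Nat.cofinite_eq_atTop, tendsto_zero_iff_norm_tendsto_zero]
    apply squeeze_zero (fun i => norm_nonneg _) hnorm_f
    have h1 : Tendsto (fun i : ℕ => j₀ + i) atTop atTop := by
      simpa [add_comm] using tendsto_add_atTop_nat j₀
    exact hb.comp h1
  have hsplit : ∑' i, f i = b j₀ + ∑' i, f (i + 1) := by
    rw [hsum.tsum_eq_zero_add]
    congr 1
    simp [hf]
  have htail : ‖∑' i, f (i + 1)‖ ≤ ‖b j₀‖ * (p : ℝ)⁻¹ := by
    apply IsUltrametricDist.norm_tsum_le_of_forall_le_of_nonneg (by positivity)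
    intro i
    exact (hnorm_f (i + 1)).trans (hlt (j₀ + (i + 1)) (by omega))
  have hTlt : ‖∑' i, f (i + 1)‖ < ‖b j₀‖ := by
    have h2 : ‖b j₀‖ * (p : ℝ)⁻¹ < ‖b j₀‖ * 1 := by
      apply mul_lt_mul_of_pos_left _ hbpos
      rw [inv_lt_one_iff₀]
      right; exact hp1
    rw [mul_one] at h2
    linarith
  have hSnorm : ‖∑' i, f i‖ = ‖b j₀‖ := by
    rw [hsplit, IsUltrametricDist.norm_add_eq_max_of_norm_ne_norm (ne_of_gt hTlt),
      max_eq_left hTlt.le]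
  have hSne : (∑' i, f i) ≠ 0 := by
    intro h
    rw [h, norm_zero] at hSnorm
    exact hbpos.ne hSnorm
  have hSval : (∑' i, f i).valuation = (b j₀).valuation := by
    have h1 := PadicInt.norm_eq_zpow_neg_valuation hSne
    rw [hSnorm, PadicInt.norm_eq_zpow_neg_valuation hb0] at h1
    have h2 := (zpow_right_strictMono₀ hp1).injective h1
    omega
  have hc0 : c j₀ = (p : ℤ_[p]) ^ (r * j₀) * ∑' i, f i := hc j₀
  have hcval : (c j₀).valuation = (r * j₀ : ℕ) + (b j₀).valuation := by
    rw [hc0, PadicInt.valuation_p_pow_mul _ _ hSne, hSval]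
  have hpne : (p : ℤ_[p]) ≠ 0 := by
    exact_mod_cast hp.1.ne_zero
  have hcne : c j₀ ≠ 0 := by
    rw [hc0]
    exact mul_ne_zero (pow_ne_zero _ hpne) hSne
  have hmain : vP p (c j₀ : ℚ_[p]) = vP p (b j₀ : ℚ_[p]) + ((r * j₀ : ℤ) : WithTop ℤ) := by
    rw [hvP _ hcne, hvP _ hb0, hcval]
    rw [add_comm]
    norm_cast
  exact ⟨hmain, ⟨j₀, le_of_eq hmain⟩⟩
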